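/- Let x ∈ C_1([a,b],V) and y ∈ C_1([c,d],V) be continuous bounded variation paths, and let φ : ℕ∪{0} → ℝ be a weight function such that both |φ| and |φ₊| satisfy the summability condition (Σ_k C^k |φ(k)|/(k!)² < ∞ for all C > 0), where φ₊(k) := φ(k+1). Then the two-parameter φ-signature kernel k_φ(x,y)_{s,t} := Σ_{k≥0} φ(k)⟨S(x)^{(k)}_{[a,s]}, S(y)^{(k)}_{[c,t]}⟩_{V^{⊗k}} satisfies the integral equation k_φ(x,y)_{s,t} = φ(0) + ∫_a^s ∫_c^t k_{φ₊}(x,y)_{u,v} ⟨dx_u, dy_v⟩_V for all s ∈ [a,b], t ∈ [c,d]. -/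

import Mathlib

noncomputable section

open Filter Topology MeasureTheory

/-- Model of a finite-dimensional real inner product space of dimension `d`. -/
abbrev Vec (d : ℕ) : Type := EuclideanSpace ℝ (Fin d)

/-- The `k`-th tensor power `V^{⊗k}` of `Vec d` with its Hilbert–Schmidt inner product,
realised in coordinates indexed by words of length `k` over the alphabet `Fin d`. -/
abbrev TLevel (d k : ℕ) : Type := EuclideanSpace ℝ (Fin k → Fin d)

/-- The extended tensor algebra `T((V)) = ∏_{k ≥ 0} V^{⊗k}`. -/
abbrev TSeq (d : ℕ) : Type := ∀ k : ℕ, TLevel d k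

/-- Riemann–Stieltjes sum of `∫ f dg` over `[a,b]` along the uniform partition with `n` pieces. -/
def rsSum (f g : ℝ → ℝ) (a b : ℝ) (n : ℕ) : ℝ :=
  ∑ i ∈ Finset.range n,
    f (a + i * (b - a) / n) *
      (g (a + (i + 1) * (b - a) / n) - g (a + i * (b - a) / n))

/-- The (Young / Riemann–Stieltjes) integral `∫_a^b f dg`, defined as the limit of
Riemann–Stieltjes sums along uniform partitions (junk value if no limit exists). -/
def rsInt (f g : ℝ → ℝ) (a b : ℝ) : ℝ :=
  limUnder atTop (rsSum f g a b)

/-- Iterated (Young) integral coordinate of a path, with the word given in *reverse*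
order, so that `sigWord x a (i :: w) t = ∫_a^t (sigWord x a w u) d(x^i_u)`. -/
def sigWord {d : ℕ} (x : ℝ → Vec d) (a : ℝ) : List (Fin d) → ℝ → ℝ
  | [], _ => 1
  | i :: w, t => rsInt (fun u => sigWord x a w u) (fun u => x u i) a t

/-- The `k`-th signature level `S(x)^{(k)}_{[a,b]} ∈ V^{⊗k}`, in coordinates. -/
def sigLevel {d : ℕ} (x : ℝ → Vec d) (a b : ℝ) (k : ℕ) : TLevel d k :=
  WithLp.toLp 2 (fun idx => sigWord x a (List.ofFn idx).reverse b)

/-- The signature transform `S(x)_{[a,b]} ∈ T((V))`. -/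
def signatureT {d : ℕ} (x : ℝ → Vec d) (a b : ℝ) : TSeq d :=
  fun k => sigLevel x a b k

/-- The set of sums `Σ_i ‖x_{t_{i+1}} − x_{t_i}‖^p` over partitions `a = t_0 ≤ … ≤ t_n = b`. -/
def varSums {E : Type*} [NormedAddCommGroup E] (x : ℝ → E) (p a b : ℝ) : Set ℝ :=
  { s | ∃ (n : ℕ) (t : ℕ → ℝ), Monotone t ∧ t 0 = a ∧ t n = b ∧
      s = ∑ i ∈ Finset.range n, ‖x (t (i + 1)) - x (t i)‖ ^ p }

/-- `x ∈ C_p([a,b], E)` : continuous with finite `p`-variation on `[a,b]`. -/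
def MemCp {E : Type*} [NormedAddCommGroup E] (x : ℝ → E) (p a b : ℝ) : Prop :=
  ContinuousOn x (Set.Icc a b) ∧ BddAbove (varSums x p a b)

/-- The `p`-variation norm `‖x‖_{p,[a,b]}`. -/
def pvar {E : Type*} [NormedAddCommGroup E] (x : ℝ → E) (p a b : ℝ) : ℝ :=
  sSup (varSums x p a b) ^ (1 / p)

/-- The product of the extended tensor algebra `T((V))`:
`(v · w)_k = Σ_{l=0}^{k} v_l ⊗ w_{k-l}`, in coordinates. -/
def seqMul {d : ℕ} (v w : TSeq d) : TSeq d :=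
  fun k => WithLp.toLp 2 (fun idx =>
    ∑ l : Fin (k + 1),
      v l.1 (fun i => idx ⟨i.1, lt_of_lt_of_le i.2 (Nat.lt_succ_iff.mp l.2)⟩) *
        w (k - l.1) (fun j => idx ⟨l.1 + j.1, by have hj := j.2; omega⟩))

/-- The unit `1 = (1,0,0,…)` of `T((V))`. -/
def seqOne (d : ℕ) : TSeq d :=
  fun k => if k = 0 then WithLp.toLp 2 (fun _ => (1 : ℝ)) else 0

/-- Truncation (canonical projection) `π_N : T((V)) → T_N(V)`. -/
def truncTS {d : ℕ} (N : ℕ) (v : TSeq d) : TSeq d :=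
  fun k => if k ≤ N then v k else 0

/-- Tensor polynomials: elements of `T(V) = ⊕_k V^{⊗k}` inside `T((V))`. -/
def FinSuppTS {d : ℕ} (f : TSeq d) : Prop := ∃ N, ∀ k, N < k → f k = 0

/-- Pairing of a tensor polynomial over the dual with an element of `T((V))`,
using the canonical (Hilbert–Schmidt) identification `(V^{⊗k})* ≅ (V*)^{⊗k}`. -/
def pairTS {d : ℕ} (f v : TSeq d) : ℝ :=
  ∑' k, @inner ℝ _ _ (f k) (v k)

/-- The shuffle product on `T(V*)`, in coordinates:
`(f ⧢ g)_n(w) = Σ_{A ⊆ {1,…,n}} f_{|A|}(w|_A) · g_{n−|A|}(w|_{Aᶜ})`. -/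
def shuffleTS {d : ℕ} (f g : TSeq d) : TSeq d :=
  fun n => WithLp.toLp 2 (fun idx =>
    ∑ A : Finset (Fin n),
      f A.card (fun i => idx (A.orderIsoOfFin rfl i).1) *
        g (n - A.card) (fun j =>
          idx ((Aᶜ).orderIsoOfFin (by simp [Finset.card_compl]) j).1))

/-- Concatenation `x * y` of paths, where `x` lives on `[a,b]` and `y` on `[b,c]`. -/
def concatP {d : ℕ} (x y : ℝ → Vec d) (b : ℝ) : ℝ → Vec d :=
  fun t => if t ≤ b then x t else y t - y b + x b

/-- Signatures over a fixed interval `[a,b]` of paths in `C_p([a,b],V)`. -/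
def SigSet (d : ℕ) (p a b : ℝ) : Set (TSeq d) :=
  { s | ∃ x : ℝ → Vec d, MemCp x p a b ∧ s = signatureT x a b }

/-- `S_p`: the image of `C_p(V)` under the signature transform. -/
def SigSetAll (d : ℕ) (p : ℝ) : Set (TSeq d) :=
  { s | ∃ (a b : ℝ) (x : ℝ → Vec d), a ≤ b ∧ MemCp x p a b ∧ s = signatureT x a b }

/-- The truncated tensor algebra `T_N(V) = ⊕_{k=0}^N V^{⊗k}` as a submodule of `T((V))`. -/
def truncSubmodule (d N : ℕ) : Submodule ℝ (TSeq d) where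
  carrier := { v | ∀ k, N < k → v k = 0 }
  add_mem' := fun {u v} hu hv k hk => by
    show u k + v k = 0
    rw [hu k hk, hv k hk, add_zero]
  zero_mem' := fun k _ => rfl
  smul_mem' := fun c {v} hv k hk => by
    show c • v k = 0
    rw [hv k hk, smul_zero]

/-- Paths in `C_p([a,b],V)` started at the origin. -/
def PathsFrom0 (d : ℕ) (p a b : ℝ) : Type := {x : ℝ → Vec d // MemCp x p a b ∧ x a = 0}

/-- Tree-like equivalence: two paths are equivalent iff their signatures agree. -/
def sigSetoid (d : ℕ) (p a b : ℝ) : Setoid (PathsFrom0 d p a b) where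
  r x y := signatureT x.1 a b = signatureT y.1 a b
  iseqv := ⟨fun _ => rfl, Eq.symm, Eq.trans⟩

/-- The space `𝒞_p` of unparameterised paths. -/
def UPath (d : ℕ) (p a b : ℝ) : Type := Quotient (sigSetoid d p a b)

/-- The signature transform on unparameterised paths. -/
def sigQ (d : ℕ) (p a b : ℝ) : UPath d p a b → TSeq d :=
  Quotient.lift (fun x => signatureT x.1 a b) (fun _ _ h => h)

/-- The product topology `χ_pr` on `𝒞_p`: the topology induced by the signature
transform from the product topology on `T((V)) = ∏_k V^{⊗k}`. -/
def prodTop (d : ℕ) (p a b : ℝ) : TopologicalSpace (UPath d p a b) :=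
  TopologicalSpace.induced (sigQ d p a b) inferInstance

/-- The tree-reduced length of an unparameterised path: the infimum of the `1`-variation
over the bounded-variation representatives of the class. -/
def treeLength (d : ℕ) (p a b : ℝ) (q : UPath d p a b) : ℝ :=
  sInf { L | ∃ x : PathsFrom0 d p a b,
    Quotient.mk (sigSetoid d p a b) x = q ∧ MemCp x.1 1 a b ∧ L = pvar x.1 1 a b }

/-- `B(r)`: unparameterised paths possessing a bounded-variation representative and
whose tree-reduced length is at most `r`. -/
def ballB (d : ℕ) (p a b r : ℝ) : Set (UPath d p a b) :=
  { q | (∃ x : PathsFrom0 d p a b,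
      Quotient.mk (sigSetoid d p a b) x = q ∧ MemCp x.1 1 a b) ∧ treeLength d p a b q ≤ r }

/-- The `φ`-inner product `⟨u,v⟩_φ = Σ_k φ(k) ⟨u_k, v_k⟩` on tensor sequences. -/
def kTS (d : ℕ) (φ : ℕ → ℝ) (u v : TSeq d) : ℝ :=
  ∑' k, φ k * @inner ℝ _ _ (u k) (v k)

/-- The `φ`-signature kernel on unparameterised paths. -/
def kQ (d : ℕ) (p a b : ℝ) (φ : ℕ → ℝ) (q q' : UPath d p a b) : ℝ :=
  kTS d φ (sigQ d p a b q) (sigQ d p a b q')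

/-- The two-parameter `φ`-signature kernel `k_φ(x,y)_{s,t}` of two paths. -/
def kPath (d : ℕ) (φ : ℕ → ℝ) (x y : ℝ → Vec d) (a c s t : ℝ) : ℝ :=
  ∑' k, φ k * @inner ℝ _ _ (sigLevel x a s k) (sigLevel y c t k)

/-- Double Riemann–Stieltjes sum approximating `∫_a^s ∫_c^t F(u,v) ⟨dx_u, dy_v⟩`. -/
def rsSum2 {d : ℕ} (F : ℝ → ℝ → ℝ) (x y : ℝ → Vec d) (a s c t : ℝ) (n : ℕ) : ℝ :=
  ∑ i ∈ Finset.range n, ∑ j ∈ Finset.range n,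
    F (a + i * (s - a) / n) (c + j * (t - c) / n) *
      @inner ℝ _ _
        (x (a + (i + 1) * (s - a) / n) - x (a + i * (s - a) / n))
        (y (c + (j + 1) * (t - c) / n) - y (c + j * (t - c) / n))

/-- The element `i₁(v) ∈ T((V))` concentrated in tensor degree one. -/
def unitVec {d : ℕ} (v : Vec d) : TSeq d :=
  fun k =>
    match k with
    | 1 => WithLp.toLp 2 (fun idx => v (idx 0))
    | _ => 0

/-- `E`-valued Riemann–Stieltjes sums for the controlled integral `∫_a^t Y_u · dx_u`,
where `m : E → V → E` implements right multiplication by degree-one tensors. -/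
def rsSumE {d : ℕ} {E : Type*} [NormedAddCommGroup E]
    (m : E → Vec d → E) (Y : ℝ → E) (x : ℝ → Vec d) (a t : ℝ) (n : ℕ) : E :=
  ∑ i ∈ Finset.range n,
    m (Y (a + i * (t - a) / n))
      (x (a + (i + 1) * (t - a) / n) - x (a + i * (t - a) / n))



namespace SigAux

/-- mean value inequality -/
lemma pow_mul_sub_le (p q : ℝ) (hp : 0 ≤ p) (hpq : p ≤ q) (k : ℕ) :
    p ^ k * (q - p) ≤ (q ^ (k + 1) - p ^ (k + 1)) / (k + 1) := by
  rw [le_div_iff₀ (by positivity)]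
  have h := geom_sum₂_mul q p (k + 1)
  rw [← h]
  have hb : ∀ i ∈ Finset.range (k+1), p ^ k ≤ q ^ i * p ^ (k + 1 - 1 - i) := by
    intro i hi
    simp only [Finset.mem_range] at hi
    have : p ^ k = p ^ i * p ^ (k - i) := by
      rw [← pow_add]; congr 1; omega
    have hkk : k + 1 - 1 - i = k - i := by omega
    rw [this, hkk]
    exact mul_le_mul_of_nonneg_right (pow_le_pow_left₀ hp hpq i) (pow_nonneg hp _)
  calc p ^ k * (q - p) * (k+1) = ((k+1 : ℕ) * p ^ k) * (q - p) := by push_cast; ring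
    _ ≤ (∑ i ∈ Finset.range (k+1), q ^ i * p ^ (k + 1 - 1 - i)) * (q - p) := by
        apply mul_le_mul_of_nonneg_right _ (by linarith)
        calc ((k+1 : ℕ) : ℝ) * p ^ k = ∑ _i ∈ Finset.range (k+1), p ^ k := by
              rw [Finset.sum_const, Finset.card_range, nsmul_eq_mul]
          _ ≤ _ := Finset.sum_le_sum hb

/-- regrouping a sum over `range (n*m)` -/
lemma sum_range_mul {M : Type*} [AddCommMonoid M] (f : ℕ → M) (n m : ℕ) :
    ∑ k ∈ Finset.range (n * m), f k = ∑ i ∈ Finset.range n, ∑ r ∈ Finset.range m, f (i * m + r) := by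
  induction n with
  | zero => simp
  | succ n ih =>
    rw [Nat.succ_mul, Finset.sum_range_add, ih, Finset.sum_range_succ]

variable {d : ℕ} {E : Type*} [NormedAddCommGroup E]

lemma varSums_nonneg {x : ℝ → E} {a u s : ℝ} (hs : s ∈ varSums x 1 a u) : 0 ≤ s := by
  obtain ⟨n, t, _, _, _, rfl⟩ := hs
  apply Finset.sum_nonneg
  intro i _
  positivity

lemma varSums_extend {x : ℝ → E} {a u v : ℝ} (huv : u ≤ v) {s : ℝ}
    (hs : s ∈ varSums x 1 a u) : s + ‖x v - x u‖ ∈ varSums x 1 a v := by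
  obtain ⟨n, t, ht, ht0, htn, rfl⟩ := hs
  have htle : ∀ i, i ≤ n → t i ≤ u := fun i hi => htn ▸ ht hi
  refine ⟨n + 1, fun i => if i ≤ n then t i else v, ?_, ?_, ?_, ?_⟩
  · intro i j hij
    by_cases hi : i ≤ n <;> by_cases hj : j ≤ n <;> simp only [hi, hj, if_true, if_false]
    · exact ht hij
    · exact (htle i hi).trans huv
    · omega
    · exact le_rfl
  · simp [ht0]
  · simp
  · rw [Finset.sum_range_succ]
    congr 1
    · apply Finset.sum_congr rfl
      intro i hi
      simp only [Finset.mem_range] at hi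
      have h1 : i + 1 ≤ n := hi
      have h2 : i ≤ n := by omega
      simp only [h1, h2, if_true]
    · have h1 : ¬ (n + 1 ≤ n) := by omega
      simp [h1, htn]

lemma varSums_nonempty {x : ℝ → E} {a u : ℝ} (hau : a ≤ u) : (varSums x 1 a u).Nonempty := by
  refine ⟨‖x u - x a‖ ^ (1:ℝ), 1, fun i => if i = 0 then a else u, ?_, by simp, by simp, by simp⟩
  intro i j hij
  by_cases hi : i = 0 <;> by_cases hj : j = 0 <;> simp [hi, hj, hau] <;> omega


/-- the running total variation -/
def vom (x : ℝ → E) (a u : ℝ) : ℝ := sSup (varSums x 1 a u)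

lemma varSums_bddAbove {x : ℝ → E} {a b u : ℝ} (hub : u ≤ b)
    (hb : BddAbove (varSums x 1 a b)) : BddAbove (varSums x 1 a u) := by
  obtain ⟨M, hM⟩ := hb
  refine ⟨M, fun s hs => ?_⟩
  have h2 := varSums_extend hub hs
  have : s ≤ s + ‖x b - x u‖ := by
    have := norm_nonneg (x b - x u); linarith
  exact this.trans (hM h2)

lemma le_vom {x : ℝ → E} {a b u : ℝ} (hub : u ≤ b) (hb : BddAbove (varSums x 1 a b))
    {s : ℝ} (hs : s ∈ varSums x 1 a u) : s ≤ vom x a u :=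
  le_csSup (varSums_bddAbove hub hb) hs

lemma vom_nonneg {x : ℝ → E} {a b u : ℝ} (hau : a ≤ u) (hub : u ≤ b)
    (hb : BddAbove (varSums x 1 a b)) : 0 ≤ vom x a u := by
  obtain ⟨s, hs⟩ := varSums_nonempty (x := x) hau
  exact (varSums_nonneg hs).trans (le_vom hub hb hs)

lemma norm_sub_le_vom_sub {x : ℝ → E} {a b u v : ℝ} (hau : a ≤ u) (huv : u ≤ v) (hvb : v ≤ b)
    (hb : BddAbove (varSums x 1 a b)) : ‖x v - x u‖ ≤ vom x a v - vom x a u := by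
  have h : ∀ s ∈ varSums x 1 a u, s ≤ vom x a v - ‖x v - x u‖ := by
    intro s hs
    have := le_vom (hvb) hb (varSums_extend huv hs)
    linarith
  have := csSup_le (varSums_nonempty hau) h
  have h0 : vom x a u ≤ vom x a v - ‖x v - x u‖ := this
  linarith

lemma vom_mono {x : ℝ → E} {a b u v : ℝ} (hau : a ≤ u) (huv : u ≤ v) (hvb : v ≤ b)
    (hb : BddAbove (varSums x 1 a b)) : vom x a u ≤ vom x a v := by
  have := norm_sub_le_vom_sub hau huv hvb hb
  have := norm_nonneg (x v - x u)
  linarith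

/-- coordinate increments are controlled by the variation function -/
lemma coord_abs_le_vom {d : ℕ} {x : ℝ → Vec d} {a b u v : ℝ} (hau : a ≤ u) (huv : u ≤ v)
    (hvb : v ≤ b) (hb : BddAbove (varSums x 1 a b)) (i : Fin d) :
    |x v i - x u i| ≤ vom x a v - vom x a u := by
  refine le_trans ?_ (norm_sub_le_vom_sub hau huv hvb hb)
  have : x v i - x u i = (x v - x u) i := rfl
  rw [this]
  have h := EuclideanSpace.norm_eq (x v - x u)
  rw [h]
  have h1 : |(x v - x u) i| = √(‖(x v - x u) i‖ ^ 2) := by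
    rw [Real.sqrt_sq_eq_abs]; simp
  rw [h1]
  apply Real.sqrt_le_sqrt
  exact Finset.single_le_sum (f := fun j => ‖(x v - x u) j‖ ^ 2) (fun j _ => by positivity) (Finset.mem_univ i)

variable {a b : ℝ}


lemma node_mem_Icc {s : ℝ} (hs : s ∈ Set.Icc a b) {i n : ℕ} (hin : i ≤ n) :
    a + i * (s - a) / n ∈ Set.Icc a b := by
  obtain ⟨has, hsb⟩ := hs
  rcases Nat.eq_zero_or_pos n with hn | hn
  · subst hn
    interval_cases i
    simp [has.trans hsb]
  have hn0 : (0:ℝ) < n := by exact_mod_cast hn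
  constructor
  · have hsa : (0:ℝ) ≤ s - a := by linarith
    have : (0:ℝ) ≤ i * (s - a) / n := by positivity
    linarith
  · have h1 : (i:ℝ) * (s - a) ≤ n * (s - a) := by
      apply mul_le_mul_of_nonneg_right _ (by linarith)
      exact_mod_cast hin
    have h2 : (i:ℝ) * (s - a) / n ≤ n * (s - a) / n :=
      div_le_div_of_nonneg_right h1 hn0.le
    have h3 : (n:ℝ) * (s - a) / n = s - a := by field_simp
    rw [h3] at h2
    linarith

lemma node_mono {s : ℝ} (has : a ≤ s) {i j n : ℕ} (hij : i ≤ j) :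
    a + i * (s - a) / n ≤ a + j * (s - a) / n := by
  have : (i:ℝ) * (s - a) ≤ j * (s - a) :=
    mul_le_mul_of_nonneg_right (by exact_mod_cast hij) (by linarith)
  have hn : (0:ℝ) ≤ n := Nat.cast_nonneg n
  have := div_le_div_of_nonneg_right this hn
  linarith


variable {f g om : ℝ → ℝ}

/-- Core estimate comparing the `n`-point sum with the `n*m`-point sum. -/
lemma rsSum_compare (hab : a ≤ b)
    (hg : ∀ u v, a ≤ u → u ≤ v → v ≤ b → |g v - g u| ≤ om v - om u)
    {ε δ : ℝ} (hε : 0 ≤ ε) (hδ : 0 < δ)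
    (hfe : ∀ u ∈ Set.Icc a b, ∀ v ∈ Set.Icc a b, |u - v| < δ → |f u - f v| ≤ ε)
    {n m : ℕ} (hn : 1 ≤ n) (hm : 1 ≤ m) {s : ℝ} (hs : s ∈ Set.Icc a b)
    (hmesh : (b - a) / n < δ) :
    |rsSum f g a s n - rsSum f g a s (n * m)| ≤ ε * (om b - om a) := by
  obtain ⟨has, hsb⟩ := hs
  have hnR : (0:ℝ) < n := by exact_mod_cast hn
  have hmR : (0:ℝ) < m := by exact_mod_cast hm
  set N := n * m with hN
  have hNR : (0:ℝ) < (N:ℕ) := by positivity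
  set u : ℕ → ℝ := fun k => a + k * (s - a) / N with hu
  -- rewrite the big sum
  have hterm : rsSum f g a s N = ∑ k ∈ Finset.range N,
      f (u k) * (g (u (k + 1)) - g (u k)) := by
    rw [rsSum]
    apply Finset.sum_congr rfl; intro k _
    simp only [hu, Nat.cast_add, Nat.cast_one]
  have hbig : rsSum f g a s N = ∑ i ∈ Finset.range n, ∑ r ∈ Finset.range m,
      f (u (i * m + r)) * (g (u (i * m + r + 1)) - g (u (i * m + r))) := by
    rw [hterm, sum_range_mul]
  -- rewrite the small sum
  have hnode : ∀ i : ℕ, a + (i:ℝ) * (s - a) / n = u (i * m) := by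
    intro i
    simp only [hu]
    have : ((i * m : ℕ) : ℝ) = (i:ℝ) * m := by push_cast; ring
    rw [this]
    rw [hN]
    push_cast
    field_simp
  have hsmall : rsSum f g a s n = ∑ i ∈ Finset.range n, ∑ r ∈ Finset.range m,
      f (u (i * m)) * (g (u (i * m + r + 1)) - g (u (i * m + r))) := by
    rw [rsSum]
    apply Finset.sum_congr rfl; intro i _
    rw [← Finset.mul_sum]
    have htel : ∑ r ∈ Finset.range m, (g (u (i * m + r + 1)) - g (u (i * m + r)))
        = g (u ((i+1) * m)) - g (u (i * m)) := by
      have h := Finset.sum_range_sub (fun r => g (u (i * m + r))) m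
      simp only [← Nat.add_assoc] at h
      rw [h]
      have e1 : i * m + m = (i+1) * m := by ring
      have e2 : i * m + 0 = i * m := rfl
      rw [e1, e2]
    rw [htel, hnode i]
    have : a + ((i:ℝ) + 1) * (s - a) / n = u ((i+1) * m) := by
      have h := hnode (i+1)
      push_cast at h ⊢
      linarith [h]
    rw [this]
  -- nodes are ordered and in the interval
  have humem : ∀ k ≤ N, u k ∈ Set.Icc a b := fun k hk => node_mem_Icc ⟨has, hsb⟩ hk
  have humono : ∀ j k : ℕ, j ≤ k → u j ≤ u k := fun j k h => node_mono has h
  have hom : ∀ k < N, |g (u (k+1)) - g (u k)| ≤ om (u (k+1)) - om (u k) := by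
    intro k hk
    exact hg _ _ (humem k (by omega)).1 (humono k (k+1) (by omega)) (humem (k+1) (by omega)).2
  -- the difference estimate
  rw [hsmall, hbig, ← Finset.sum_sub_distrib]
  have key : ∀ i ∈ Finset.range n, |∑ r ∈ Finset.range m,
        f (u (i * m)) * (g (u (i * m + r + 1)) - g (u (i * m + r)))
      - ∑ r ∈ Finset.range m,
        f (u (i * m + r)) * (g (u (i * m + r + 1)) - g (u (i * m + r)))|
      ≤ ∑ r ∈ Finset.range m, ε * (om (u (i * m + r + 1)) - om (u (i * m + r))) := by
    intro i hi
    simp only [Finset.mem_range] at hi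
    rw [← Finset.sum_sub_distrib]
    refine (Finset.abs_sum_le_sum_abs _ _).trans (Finset.sum_le_sum ?_)
    intro r hr
    simp only [Finset.mem_range] at hr
    have hkN : i * m + r < N := by
      rw [hN]
      calc i * m + r < i * m + m := by omega
        _ = (i + 1) * m := by ring
        _ ≤ n * m := Nat.mul_le_mul_right m (by omega)
    rw [← sub_mul, abs_mul]
    have h1 : |f (u (i * m)) - f (u (i * m + r))| ≤ ε := by
      apply hfe _ (humem _ (by omega)) _ (humem _ (by omega))
      have hle : u (i * m) ≤ u (i * m + r) := humono _ _ (by omega)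
      rw [abs_sub_comm, abs_of_nonneg (by linarith)]
      have : u (i * m + r) - u (i * m) = r * (s - a) / N := by
        simp only [hu]; push_cast; ring
      rw [this]
      have hra : (r:ℝ) * (s - a) / N ≤ (m:ℝ) * (s - a) / N := by
        apply div_le_div_of_nonneg_right _ hNR.le
        exact mul_le_mul_of_nonneg_right (by exact_mod_cast hr.le) (by linarith)
      have heq : (m:ℝ) * (s - a) / N = (s - a) / n := by
        rw [hN]; push_cast; field_simp
      have hfin : (s - a) / n ≤ (b - a) / n := by
        apply div_le_div_of_nonneg_right (by linarith) hnR.le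
      linarith
    exact mul_le_mul h1 (hom _ hkN) (abs_nonneg _) hε
  refine (Finset.abs_sum_le_sum_abs _ _).trans ?_
  refine le_trans (Finset.sum_le_sum key) ?_
  calc ∑ i ∈ Finset.range n, ∑ r ∈ Finset.range m,
        ε * (om (u (i * m + r + 1)) - om (u (i * m + r)))
      = ε * ∑ k ∈ Finset.range N, (om (u (k + 1)) - om (u k)) := by
        rw [Finset.mul_sum, sum_range_mul (fun k => ε * (om (u (k+1)) - om (u k))) n m]
    _ = ε * (om (u N) - om (u 0)) := by rw [Finset.sum_range_sub (fun k => om (u k)) N]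
    _ ≤ ε * (om b - om a) := by
        apply mul_le_mul_of_nonneg_left _ hε
        have h0 : u 0 = a := by simp [hu]
        have hNs : u N ≤ s := (node_mem_Icc (b := s) ⟨has, le_refl s⟩ (le_refl N)).2
        have hsb' : om s ≤ om b := by
          have := hg s b has hsb (le_refl b)
          have := abs_nonneg (g b - g s)
          linarith [hg s b has hsb (le_refl b)]
        have homono : om (u N) ≤ om s := by
          have h := hg (u N) s (humem N (le_refl N)).1 hNs hsb
          have := abs_nonneg (g s - g (u N))
          linarith
        rw [h0]
        linarith


/-- Uniform Cauchy property of RS sums on `[a,b]`. -/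
lemma rsSum_uniformCauchy (hab : a ≤ b) (hf : ContinuousOn f (Set.Icc a b))
    (hg : ∀ u v, a ≤ u → u ≤ v → v ≤ b → |g v - g u| ≤ om v - om u) :
    UniformCauchySeqOn (fun n s => rsSum f g a s n) atTop (Set.Icc a b) := by
  rw [Metric.uniformCauchySeqOn_iff]
  intro ε hε
  set W := om b - om a with hW
  have hW0 : 0 ≤ W := by
    have := hg a b le_rfl hab le_rfl
    have := abs_nonneg (g b - g a)
    linarith
  set ε' := ε / (3 * (W + 1)) with hε'
  have hε'0 : 0 < ε' := by positivity
  obtain ⟨δ, hδ, hδf⟩ := Metric.uniformContinuousOn_iff.mp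
    (isCompact_Icc.uniformContinuousOn_of_continuous hf) ε' hε'0
  obtain ⟨N, hN1, hNδ⟩ : ∃ N : ℕ, 1 ≤ N ∧ (b - a) / N < δ := by
    refine ⟨⌊(b - a) / δ⌋₊ + 1, by omega, ?_⟩
    rw [div_lt_iff₀ (by positivity)]
    have h2 := Nat.lt_floor_add_one ((b - a) / δ)
    have h3 : (b - a) / δ < (⌊(b - a) / δ⌋₊ + 1 : ℕ) := by push_cast; linarith
    have h4 : b - a < (⌊(b - a) / δ⌋₊ + 1 : ℕ) * δ := by
      calc b - a = (b - a) / δ * δ := by field_simp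
        _ < (⌊(b - a) / δ⌋₊ + 1 : ℕ) * δ := mul_lt_mul_of_pos_right h3 hδ
    linarith [mul_comm ((⌊(b - a) / δ⌋₊ + 1 : ℕ) : ℝ) δ]
  have hfe : ∀ u ∈ Set.Icc a b, ∀ v ∈ Set.Icc a b, |u - v| < δ → |f u - f v| ≤ ε' := by
    intro u hu v hv huv
    have := hδf u hu v hv (by rwa [Real.dist_eq])
    rw [Real.dist_eq] at this
    exact this.le
  have hmesh : ∀ n : ℕ, N ≤ n → (b - a) / n < δ := by
    intro n hn
    have h1 : (b - a) / n ≤ (b - a) / N := by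
      have hN0 : (0:ℝ) < N := by exact_mod_cast hN1
      exact div_le_div_of_nonneg_left (by linarith) hN0 (by exact_mod_cast hn)
    linarith
  refine ⟨N, fun p hp q hq s hs => ?_⟩
  have key : ∀ n m : ℕ, N ≤ n → 1 ≤ m → |rsSum f g a s n - rsSum f g a s (n * m)| ≤ ε' * W :=
    fun n m hn hm => rsSum_compare hab hg hε'0.le hδ hfe (le_trans hN1 hn) hm hs (hmesh n hn)
  have h1 := key p q hp (le_trans hN1 hq)
  have h2 := key q p hq (le_trans hN1 hp)
  rw [Real.dist_eq]
  have hcomm : q * p = p * q := Nat.mul_comm q p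
  rw [hcomm] at h2
  have hεW : ε' * W < ε / 2 := by
    rw [hε']
    have : ε / (3 * (W + 1)) * W < ε / (3 * (W + 1)) * (W + 1) := by
      apply mul_lt_mul_of_pos_left (by linarith) hε'0
    have he : ε / (3 * (W + 1)) * (W + 1) = ε / 3 := by field_simp
    rw [he] at this
    linarith
  calc |rsSum f g a s p - rsSum f g a s q|
      ≤ |rsSum f g a s p - rsSum f g a s (p * q)| + |rsSum f g a s (p * q) - rsSum f g a s q| := by
        have := abs_sub_le (rsSum f g a s p) (rsSum f g a s (p * q)) (rsSum f g a s q)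
        linarith
    _ ≤ ε' * W + ε' * W := by
        have h2' : |rsSum f g a s (p * q) - rsSum f g a s q| = |rsSum f g a s q - rsSum f g a s (p*q)| :=
          abs_sub_comm _ _
        rw [h2']
        exact add_le_add h1 h2
    _ < ε / 2 + ε / 2 := add_lt_add hεW hεW
    _ = ε := by ring

/-- Pointwise convergence of RS sums to `rsInt`. -/
lemma rsSum_tendsto_rsInt (hab : a ≤ b) (hf : ContinuousOn f (Set.Icc a b))
    (hg : ∀ u v, a ≤ u → u ≤ v → v ≤ b → |g v - g u| ≤ om v - om u)
    {s : ℝ} (hs : s ∈ Set.Icc a b) :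
    Tendsto (rsSum f g a s) atTop (𝓝 (rsInt f g a s)) := by
  have huc := rsSum_uniformCauchy hab hf hg
  have hcs : CauchySeq (rsSum f g a s) := by
    rw [Metric.cauchySeq_iff]
    intro ε hε
    obtain ⟨N, hN⟩ := Metric.uniformCauchySeqOn_iff.mp huc ε hε
    exact ⟨N, fun p hp q hq => hN p hp q hq s hs⟩
  obtain ⟨I, hI⟩ := cauchySeq_tendsto_of_complete hcs
  rwa [rsInt, hI.limUnder_eq]

lemma rsSum_continuousOn (hf : ContinuousOn f (Set.Icc a b)) (hgc : ContinuousOn g (Set.Icc a b))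
    (n : ℕ) : ContinuousOn (fun s => rsSum f g a s n) (Set.Icc a b) := by
  apply continuousOn_finset_sum
  intro i hi
  simp only [Finset.mem_range] at hi
  have hnode : ∀ k : ℕ, k ≤ n → ContinuousOn (fun s : ℝ => a + (k:ℝ) * (s - a) / n) (Set.Icc a b)
      ∧ Set.MapsTo (fun s : ℝ => a + (k:ℝ) * (s - a) / n) (Set.Icc a b) (Set.Icc a b) := by
    intro k hk
    constructor
    · fun_prop
    · intro s hs
      exact node_mem_Icc hs hk
  obtain ⟨hc1, hm1⟩ := hnode i hi.le
  obtain ⟨hc2, hm2⟩ := hnode (i+1) hi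
  have hcast : ∀ s : ℝ, a + ((i:ℝ)+1) * (s - a) / n = a + ((i+1 : ℕ):ℝ) * (s - a) / n := by
    intro s; push_cast; ring
  apply ContinuousOn.mul
  · exact hf.comp hc1 hm1
  · apply ContinuousOn.sub
    · have := hgc.comp hc2 hm2
      simpa only [Function.comp_def, ← hcast] using this
    · exact hgc.comp hc1 hm1

/-- Continuity of the RS integral in its upper limit. -/
lemma rsInt_continuousOn (hab : a ≤ b) (hf : ContinuousOn f (Set.Icc a b))
    (hgc : ContinuousOn g (Set.Icc a b))
    (hg : ∀ u v, a ≤ u → u ≤ v → v ≤ b → |g v - g u| ≤ om v - om u) :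
    ContinuousOn (fun s => rsInt f g a s) (Set.Icc a b) := by
  have huc := rsSum_uniformCauchy hab hf hg
  have htu : TendstoUniformlyOn (fun n s => rsSum f g a s n) (fun s => rsInt f g a s)
      atTop (Set.Icc a b) :=
    huc.tendstoUniformlyOn_of_tendsto (fun s hs => rsSum_tendsto_rsInt hab hf hg hs)
  exact htu.continuousOn (Eventually.of_forall (rsSum_continuousOn hf hgc)).frequently

/-- Factorial bound for RS sums of a function bounded by `om^k/k!`. -/
lemma rsSum_le_pow_div_factorial (hab : a ≤ b)
    (hg : ∀ u v, a ≤ u → u ≤ v → v ≤ b → |g v - g u| ≤ om v - om u)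
    (hom0 : 0 ≤ om a) {k : ℕ}
    (hfb : ∀ u ∈ Set.Icc a b, |f u| ≤ om u ^ k / (Nat.factorial k))
    {s : ℝ} (hs : s ∈ Set.Icc a b) (n : ℕ) :
    |rsSum f g a s n| ≤ om s ^ (k+1) / (Nat.factorial (k+1)) := by
  obtain ⟨has, hsb⟩ := hs
  have homono : ∀ u v, a ≤ u → u ≤ v → v ≤ b → om u ≤ om v := by
    intro u v h1 h2 h3
    have := hg u v h1 h2 h3
    have := abs_nonneg (g v - g u)
    linarith
  have hom_nonneg : ∀ u, a ≤ u → u ≤ b → 0 ≤ om u := fun u h1 h2 =>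
    le_trans hom0 (homono a u le_rfl h1 h2)
  have homs : 0 ≤ om s := hom_nonneg s has hsb
  rcases Nat.eq_zero_or_pos n with hn | hn
  · subst hn
    simp only [rsSum, Finset.range_zero, Finset.sum_empty, abs_zero]
    positivity
  set u : ℕ → ℝ := fun i => a + i * (s - a) / n with hu
  have humem : ∀ i ≤ n, u i ∈ Set.Icc a b := fun i hi => node_mem_Icc ⟨has, hsb⟩ hi
  have humono : ∀ i j : ℕ, i ≤ j → u i ≤ u j := fun i j h => node_mono has h
  have hterm : ∀ i < n, |f (u i) * (g (u (i+1)) - g (u i))|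
      ≤ (om (u (i+1)) ^ (k+1) - om (u i) ^ (k+1)) / ((k+1) * Nat.factorial k) := by
    intro i hi
    have hui := humem i (by omega)
    have hui1 := humem (i+1) (by omega)
    have hle : u i ≤ u (i+1) := humono i (i+1) (by omega)
    have h1 : |f (u i)| ≤ om (u i) ^ k / Nat.factorial k := hfb _ hui
    have h2 : |g (u (i+1)) - g (u i)| ≤ om (u (i+1)) - om (u i) :=
      hg _ _ hui.1 hle hui1.2
    have h3 : 0 ≤ om (u i) := hom_nonneg _ hui.1 hui.2
    have h4 : om (u i) ≤ om (u (i+1)) := homono _ _ hui.1 hle hui1.2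
    rw [abs_mul]
    calc |f (u i)| * |g (u (i+1)) - g (u i)|
        ≤ om (u i) ^ k / Nat.factorial k * (om (u (i+1)) - om (u i)) :=
          mul_le_mul h1 h2 (abs_nonneg _) (by positivity)
      _ = om (u i) ^ k * (om (u (i+1)) - om (u i)) / Nat.factorial k := by ring
      _ ≤ ((om (u (i+1)) ^ (k+1) - om (u i) ^ (k+1)) / (k+1)) / Nat.factorial k := by
          apply div_le_div_of_nonneg_right _ (by positivity)
          exact pow_mul_sub_le _ _ h3 h4 k
      _ = (om (u (i+1)) ^ (k+1) - om (u i) ^ (k+1)) / ((k+1) * Nat.factorial k) := by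
          field_simp
  have hsum : rsSum f g a s n = ∑ i ∈ Finset.range n, f (u i) * (g (u (i+1)) - g (u i)) := by
    rw [rsSum]
    apply Finset.sum_congr rfl
    intro i _
    simp only [hu, Nat.cast_add, Nat.cast_one]
  rw [hsum]
  calc |∑ i ∈ Finset.range n, f (u i) * (g (u (i+1)) - g (u i))|
      ≤ ∑ i ∈ Finset.range n, |f (u i) * (g (u (i+1)) - g (u i))| :=
        Finset.abs_sum_le_sum_abs _ _
    _ ≤ ∑ i ∈ Finset.range n, (om (u (i+1)) ^ (k+1) - om (u i) ^ (k+1)) / ((k+1) * Nat.factorial k) := by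
        apply Finset.sum_le_sum
        intro i hi
        exact hterm i (Finset.mem_range.mp hi)
    _ = (om (u n) ^ (k+1) - om (u 0) ^ (k+1)) / ((k+1) * Nat.factorial k) := by
        rw [← Finset.sum_div, Finset.sum_range_sub (fun i => om (u i) ^ (k+1))]
    _ ≤ om s ^ (k+1) / Nat.factorial (k+1) := by
        have h0 : u 0 = a := by simp [hu]
        have hn' : u n = s := by
          simp only [hu]
          have : (n:ℝ) ≠ 0 := by positivity
          field_simp
          ring
        rw [h0, hn']
        have hfa : ((k+1) : ℝ) * Nat.factorial k = (Nat.factorial (k+1) : ℝ) := by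
          rw [Nat.factorial_succ]; push_cast; ring
        rw [hfa]
        apply div_le_div_of_nonneg_right _ (by positivity)
        have : 0 ≤ om a ^ (k+1) := by positivity
        linarith


section WordPackage

variable {d : ℕ} {x : ℝ → Vec d} (hab : a ≤ b) (hx : MemCp x 1 a b)

lemma coord_continuousOn (i : Fin d) : MemCp x 1 a b →
    ContinuousOn (fun u => x u i) (Set.Icc a b) := by
  intro hx
  have : (fun u => x u i) = (fun v : Vec d => v i) ∘ x := rfl
  rw [this]
  exact (PiLp.continuous_apply (p := 2) (β := fun _ : Fin d => ℝ) i).comp_continuousOn hx.1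

lemma coord_controlled (i : Fin d) (hx : MemCp x 1 a b) :
    ∀ u v, a ≤ u → u ≤ v → v ≤ b →
      |x v i - x u i| ≤ vom x a v - vom x a u :=
  fun u v h1 h2 h3 => coord_abs_le_vom h1 h2 h3 hx.2 i

include hab hx in
lemma sigWord_package (w : List (Fin d)) :
    ContinuousOn (sigWord x a w) (Set.Icc a b)
    ∧ (∀ s ∈ Set.Icc a b, |sigWord x a w s| ≤ vom x a s ^ w.length / (Nat.factorial w.length))
    ∧ ∀ i : Fin d,
      (∀ s ∈ Set.Icc a b, Tendsto (rsSum (sigWord x a w) (fun u => x u i) a s) atTop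
          (𝓝 (sigWord x a (i :: w) s)))
      ∧ (∀ s ∈ Set.Icc a b, ∀ n, |rsSum (sigWord x a w) (fun u => x u i) a s n|
          ≤ vom x a s ^ (w.length + 1) / (Nat.factorial (w.length + 1))) := by
  have hom0 : 0 ≤ vom x a a := vom_nonneg le_rfl hab hx.2
  induction w with
  | nil =>
    have hcont : ContinuousOn (sigWord x a []) (Set.Icc a b) := by
      show ContinuousOn (fun _ => (1:ℝ)) _
      exact continuousOn_const
    have hbdd : ∀ s ∈ Set.Icc a b, |sigWord x a [] s|
        ≤ vom x a s ^ (List.length ([] : List (Fin d))) / Nat.factorial (List.length ([] : List (Fin d))) := by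
      intro s hs
      show |(1:ℝ)| ≤ vom x a s ^ 0 / Nat.factorial 0
      simp
    refine ⟨hcont, hbdd, fun i => ⟨?_, ?_⟩⟩
    · intro s hs
      exact rsSum_tendsto_rsInt hab hcont (coord_controlled i hx) hs
    · intro s hs n
      have := rsSum_le_pow_div_factorial hab (coord_controlled i hx) hom0 (k := 0)
        (by intro u hu; simpa using hbdd u hu) hs n
      simpa using this
  | cons j w ih =>
    obtain ⟨ihc, ihb, ihi⟩ := ih
    have hcont : ContinuousOn (sigWord x a (j :: w)) (Set.Icc a b) := by
      show ContinuousOn (fun t => rsInt (fun u => sigWord x a w u) (fun u => x u j) a t) _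
      exact rsInt_continuousOn hab ihc (coord_continuousOn j hx) (coord_controlled j hx)
    have hbdd : ∀ s ∈ Set.Icc a b, |sigWord x a (j :: w) s|
        ≤ vom x a s ^ (j :: w).length / Nat.factorial (j :: w).length := by
      intro s hs
      have htd := (ihi j).1 s hs
      have hsb := (ihi j).2 s hs
      have : |sigWord x a (j :: w) s| ≤ vom x a s ^ (w.length + 1) / Nat.factorial (w.length + 1) := by
        apply le_of_tendsto htd.abs
        exact Eventually.of_forall hsb
      simpa using this
    refine ⟨hcont, hbdd, fun i => ⟨?_, ?_⟩⟩
    · intro s hs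
      exact rsSum_tendsto_rsInt hab hcont (coord_controlled i hx) hs
    · intro s hs n
      have := rsSum_le_pow_div_factorial hab (coord_controlled i hx) hom0
        (k := w.length + 1) (by intro u hu; simpa using hbdd u hu) hs n
      simpa using this

end WordPackage

section Algebra

lemma sum4_swap {ι κ W K : Type*} (I : Finset ι) (J : Finset κ) (Wf : Finset W) (Kf : Finset K)
    (T : W → K → ι → κ → ℝ) :
    ∑ i ∈ I, ∑ j ∈ J, ∑ w ∈ Wf, ∑ α ∈ Kf, T w α i j
      = ∑ w ∈ Wf, ∑ α ∈ Kf, ∑ i ∈ I, ∑ j ∈ J, T w α i j :=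
  calc ∑ i ∈ I, ∑ j ∈ J, ∑ w ∈ Wf, ∑ α ∈ Kf, T w α i j
      = ∑ i ∈ I, ∑ w ∈ Wf, ∑ j ∈ J, ∑ α ∈ Kf, T w α i j :=
        Finset.sum_congr rfl fun i _ => Finset.sum_comm
    _ = ∑ w ∈ Wf, ∑ i ∈ I, ∑ j ∈ J, ∑ α ∈ Kf, T w α i j := Finset.sum_comm
    _ = ∑ w ∈ Wf, ∑ i ∈ I, ∑ α ∈ Kf, ∑ j ∈ J, T w α i j :=
        Finset.sum_congr rfl fun w _ => Finset.sum_congr rfl fun i _ => Finset.sum_comm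
    _ = ∑ w ∈ Wf, ∑ α ∈ Kf, ∑ i ∈ I, ∑ j ∈ J, T w α i j :=
        Finset.sum_congr rfl fun w _ => Finset.sum_comm

lemma double_sum_factor {ι κ W K : Type*} (I : Finset ι) (J : Finset κ) (Wf : Finset W)
    (Kf : Finset K) (A : W → ι → ℝ) (B : W → κ → ℝ) (P : ι → K → ℝ) (Q : κ → K → ℝ) :
    ∑ i ∈ I, ∑ j ∈ J, (∑ w ∈ Wf, A w i * B w j) * (∑ α ∈ Kf, P i α * Q j α)
      = ∑ w ∈ Wf, ∑ α ∈ Kf, (∑ i ∈ I, A w i * P i α) * (∑ j ∈ J, B w j * Q j α) := by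
  have e : ∀ i ∈ I, ∀ j ∈ J, (∑ w ∈ Wf, A w i * B w j) * (∑ α ∈ Kf, P i α * Q j α)
      = ∑ w ∈ Wf, ∑ α ∈ Kf, (A w i * P i α) * (B w j * Q j α) := by
    intro i _ j _
    rw [Finset.sum_mul_sum]
    exact Finset.sum_congr rfl fun w _ => Finset.sum_congr rfl fun α _ => by ring
  calc ∑ i ∈ I, ∑ j ∈ J, (∑ w ∈ Wf, A w i * B w j) * (∑ α ∈ Kf, P i α * Q j α)
      = ∑ i ∈ I, ∑ j ∈ J, ∑ w ∈ Wf, ∑ α ∈ Kf, (A w i * P i α) * (B w j * Q j α) :=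
        Finset.sum_congr rfl fun i hi => Finset.sum_congr rfl fun j hj => e i hi j hj
    _ = ∑ w ∈ Wf, ∑ α ∈ Kf, ∑ i ∈ I, ∑ j ∈ J, (A w i * P i α) * (B w j * Q j α) :=
        sum4_swap I J Wf Kf _
    _ = ∑ w ∈ Wf, ∑ α ∈ Kf, (∑ i ∈ I, A w i * P i α) * (∑ j ∈ J, B w j * Q j α) :=
        Finset.sum_congr rfl fun w _ => Finset.sum_congr rfl fun α _ =>
          (Finset.sum_mul_sum _ _ _ _).symm

/-- reindexing `Fin (k+1) → Fin d` by `(Fin k → Fin d) × Fin d` via `snoc`. -/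
def snocEquiv (d k : ℕ) : ((Fin k → Fin d) × Fin d) ≃ (Fin (k+1) → Fin d) where
  toFun p := Fin.snoc p.1 p.2
  invFun f := (fun i => f i.castSucc, f (Fin.last k))
  left_inv p := by
    ext i
    · simp [Fin.snoc_castSucc]
    · simp [Fin.snoc_last]
  right_inv f := by
    funext i
    refine Fin.lastCases ?_ ?_ i
    · simp [Fin.snoc_last]
    · intro j; simp [Fin.snoc_castSucc]

lemma ofFn_snoc_reverse {d k : ℕ} (idx : Fin k → Fin d) (α : Fin d) :
    (List.ofFn (Fin.snoc idx α : Fin (k+1) → Fin d)).reverse = α :: (List.ofFn idx).reverse := by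
  rw [List.ofFn_succ']
  have h1 : (fun i : Fin k => (Fin.snoc idx α : Fin (k+1) → Fin d) i.castSucc) = idx := by
    funext i; exact Fin.snoc_castSucc _ _ _
  have h2 : (Fin.snoc idx α : Fin (k+1) → Fin d) (Fin.last k) = α := Fin.snoc_last _ _
  rw [h1, h2, List.concat_eq_append, List.reverse_concat]

end Algebra
end SigAux

namespace SigAux

lemma sigLevel_inner_eq {d : ℕ} (x y : ℝ → Vec d) (a c u v : ℝ) (k : ℕ) :
    (@inner ℝ _ _ (sigLevel x a u k) (sigLevel y c v k))
      = ∑ idx : Fin k → Fin d,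
          sigWord x a (List.ofFn idx).reverse u * sigWord y c (List.ofFn idx).reverse v := by
  simp [sigLevel, PiLp.inner_apply, RCLike.inner_apply, conj_trivial]
  exact Finset.sum_congr rfl fun _ _ => mul_comm _ _

lemma word_len {d k : ℕ} (idx : Fin k → Fin d) : (List.ofFn idx).reverse.length = k := by
  simp

end SigAux

open SigAux

/-- Integral equation for the weighted signature kernel. For bounded
variation paths `x ∈ C_1([a,b],V)`, `y ∈ C_1([c,e],V)` and a real weight `φ` with `|φ|`
and `|φ₊|` satisfying the summability condition (`φ₊(k) = φ(k+1)`), the two-parameter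
`φ`-signature kernel satisfies
`k_φ(x,y)_{s,t} = φ(0) + ∫_a^s ∫_c^t k_{φ₊}(x,y)_{u,v} ⟨dx_u, dy_v⟩`, the double integral
being the limit of its Riemann–Stieltjes sums. -/
theorem weighted_signature_kernel_integral_equation {d : ℕ} (φ : ℕ → ℝ)
    (hφ : ∀ C : ℝ, 0 < C →
      Summable (fun k => C ^ k * |φ k| / (Nat.factorial k : ℝ) ^ 2))
    (hφp : ∀ C : ℝ, 0 < C →
      Summable (fun k => C ^ k * |φ (k + 1)| / (Nat.factorial k : ℝ) ^ 2))
    (a b c e : ℝ) (hab : a ≤ b) (hce : c ≤ e)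
    (x y : ℝ → Vec d) (hx : MemCp x 1 a b) (hy : MemCp y 1 c e) :
    ∀ s ∈ Set.Icc a b, ∀ t ∈ Set.Icc c e,
      Tendsto
        (fun n => rsSum2 (fun u v => kPath d (fun k => φ (k + 1)) x y a c u v) x y a s c t n)
        atTop (𝓝 (kPath d φ x y a c s t - φ 0)) := by
  intro s hs t ht
  obtain ⟨has, hsb⟩ := hs
  obtain ⟨hct, hte⟩ := ht
  classical
  set Wx := vom x a b with hWxdef
  set Wy := vom y c e with hWydef
  have hWx0 : 0 ≤ Wx := vom_nonneg hab le_rfl hx.2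
  have hWy0 : 0 ≤ Wy := vom_nonneg hce le_rfl hy.2
  -- word-level facts
  have PX := fun w : List (Fin d) => sigWord_package hab hx w
  have PY := fun w : List (Fin d) => sigWord_package hce hy w
  have hvx : ∀ u ∈ Set.Icc a b, 0 ≤ vom x a u ∧ vom x a u ≤ Wx := fun u hu =>
    ⟨vom_nonneg hu.1 hu.2 hx.2, vom_mono hu.1 hu.2 le_rfl hx.2⟩
  have hvy : ∀ v ∈ Set.Icc c e, 0 ≤ vom y c v ∧ vom y c v ≤ Wy := fun v hv =>
    ⟨vom_nonneg hv.1 hv.2 hy.2, vom_mono hv.1 hv.2 le_rfl hy.2⟩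
  have hAx : ∀ (w : List (Fin d)), ∀ u ∈ Set.Icc a b,
      |sigWord x a w u| ≤ Wx ^ w.length / Nat.factorial w.length := by
    intro w u hu
    refine le_trans ((PX w).2.1 u hu) ?_
    exact div_le_div_of_nonneg_right
      (pow_le_pow_left₀ (hvx u hu).1 (hvx u hu).2 _) (by positivity)
  have hAy : ∀ (w : List (Fin d)), ∀ v ∈ Set.Icc c e,
      |sigWord y c w v| ≤ Wy ^ w.length / Nat.factorial w.length := by
    intro w v hv
    refine le_trans ((PY w).2.1 v hv) ?_
    exact div_le_div_of_nonneg_right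
      (pow_le_pow_left₀ (hvy v hv).1 (hvy v hv).2 _) (by positivity)
  have hRx : ∀ (w : List (Fin d)) (α : Fin d) (n : ℕ),
      |rsSum (sigWord x a w) (fun u => x u α) a s n|
        ≤ Wx ^ (w.length + 1) / Nat.factorial (w.length + 1) := by
    intro w α n
    refine le_trans (((PX w).2.2 α).2 s ⟨has, hsb⟩ n) ?_
    exact div_le_div_of_nonneg_right
      (pow_le_pow_left₀ (hvx s ⟨has, hsb⟩).1 (hvx s ⟨has, hsb⟩).2 _) (by positivity)
  have hRy : ∀ (w : List (Fin d)) (α : Fin d) (n : ℕ),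
      |rsSum (sigWord y c w) (fun u => y u α) c t n|
        ≤ Wy ^ (w.length + 1) / Nat.factorial (w.length + 1) := by
    intro w α n
    refine le_trans (((PY w).2.2 α).2 t ⟨hct, hte⟩ n) ?_
    exact div_le_div_of_nonneg_right
      (pow_le_pow_left₀ (hvy t ⟨hct, hte⟩).1 (hvy t ⟨hct, hte⟩).2 _) (by positivity)
  -- the constant M
  set M := (d : ℝ) * (Wx + 1) * (Wy + 1) + 1 with hMdef
  have hM0 : 0 < M := by positivity
  have hdWW0 : 0 ≤ (d : ℝ) * Wx * Wy := by positivity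
  have hdWWM : (d : ℝ) * Wx * Wy ≤ M := by nlinarith [Nat.cast_nonneg (α := ℝ) d]
  -- bound on kernel terms
  have hterm : ∀ (k : ℕ), ∀ u ∈ Set.Icc a b, ∀ v ∈ Set.Icc c e,
      |(@inner ℝ _ _ (sigLevel x a u k) (sigLevel y c v k))|
        ≤ M ^ k / (Nat.factorial k : ℝ) ^ 2 := by
    intro k u hu v hv
    rw [sigLevel_inner_eq]
    refine (Finset.abs_sum_le_sum_abs _ _).trans ?_
    have hone : ∀ idx ∈ (Finset.univ : Finset (Fin k → Fin d)),
        |sigWord x a (List.ofFn idx).reverse u * sigWord y c (List.ofFn idx).reverse v|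
          ≤ (Wx ^ k / Nat.factorial k) * (Wy ^ k / Nat.factorial k) := by
      intro idx _
      rw [abs_mul]
      have h1 := hAx (List.ofFn idx).reverse u hu
      have h2 := hAy (List.ofFn idx).reverse v hv
      rw [word_len] at h1 h2
      exact mul_le_mul h1 h2 (abs_nonneg _) (by positivity)
    refine (Finset.sum_le_card_nsmul _ _ _ hone).trans ?_
    rw [nsmul_eq_mul]
    have hcard : ((Finset.univ : Finset (Fin k → Fin d)).card : ℝ) = (d : ℝ) ^ k := by
      simp [Fintype.card_fun]
    rw [hcard]
    have heq : (d:ℝ) ^ k * (Wx ^ k / Nat.factorial k * (Wy ^ k / Nat.factorial k))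
        = ((d:ℝ) * Wx * Wy) ^ k / (Nat.factorial k : ℝ) ^ 2 := by
      rw [mul_pow, mul_pow]
      field_simp
    rw [heq]
    exact div_le_div_of_nonneg_right (pow_le_pow_left₀ hdWW0 hdWWM k) (by positivity)
  -- summabilities
  have hsum1 : ∀ u ∈ Set.Icc a b, ∀ v ∈ Set.Icc c e,
      Summable (fun k => φ k * (@inner ℝ _ _ (sigLevel x a u k) (sigLevel y c v k))) := by
    intro u hu v hv
    apply Summable.of_norm_bounded (hφ M hM0)
    intro k
    rw [Real.norm_eq_abs, abs_mul]
    calc |φ k| * |(@inner ℝ _ _ (sigLevel x a u k) (sigLevel y c v k))|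
        ≤ |φ k| * (M ^ k / (Nat.factorial k : ℝ) ^ 2) :=
          mul_le_mul_of_nonneg_left (hterm k u hu v hv) (abs_nonneg _)
      _ = M ^ k * |φ k| / (Nat.factorial k : ℝ) ^ 2 := by ring
  have hsum2 : ∀ u ∈ Set.Icc a b, ∀ v ∈ Set.Icc c e,
      Summable (fun k => φ (k+1) * (@inner ℝ _ _ (sigLevel x a u k) (sigLevel y c v k))) := by
    intro u hu v hv
    apply Summable.of_norm_bounded (hφp M hM0)
    intro k
    rw [Real.norm_eq_abs, abs_mul]
    calc |φ (k+1)| * |(@inner ℝ _ _ (sigLevel x a u k) (sigLevel y c v k))|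
        ≤ |φ (k+1)| * (M ^ k / (Nat.factorial k : ℝ) ^ 2) :=
          mul_le_mul_of_nonneg_left (hterm k u hu v hv) (abs_nonneg _)
      _ = M ^ k * |φ (k+1)| / (Nat.factorial k : ℝ) ^ 2 := by ring
  -- the discrete level sums
  set G : ℕ → ℕ → ℝ := fun k n => ∑ idx : Fin k → Fin d, ∑ α : Fin d,
      rsSum (sigWord x a (List.ofFn idx).reverse) (fun u => x u α) a s n *
      rsSum (sigWord y c (List.ofFn idx).reverse) (fun u => y u α) c t n with hGdef
  -- identity for each n
  have hipexp : ∀ p q r w : Vec d, (@inner ℝ _ _ (p - q) (r - w))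
      = ∑ α : Fin d, (p α - q α) * (r α - w α) := by
    intro p q r w
    simp [PiLp.inner_apply, RCLike.inner_apply, conj_trivial]
    exact Finset.sum_congr rfl fun _ _ => mul_comm _ _
  have hD3 : ∀ n : ℕ,
      rsSum2 (fun u v => kPath d (fun k => φ (k + 1)) x y a c u v) x y a s c t n
        = ∑' k, φ (k+1) * G k n := by
    intro n
    have hui_mem : ∀ i ∈ Finset.range n, (a + (i:ℝ) * (s - a) / n) ∈ Set.Icc a b := by
      intro i hi
      exact node_mem_Icc ⟨has, hsb⟩ (Finset.mem_range.mp hi).le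
    have hvj_mem : ∀ j ∈ Finset.range n, (c + (j:ℝ) * (t - c) / n) ∈ Set.Icc c e := by
      intro j hj
      exact node_mem_Icc ⟨hct, hte⟩ (Finset.mem_range.mp hj).le
    -- abbreviations
    set ip : ℕ → ℕ → ℝ := fun i j => @inner ℝ _ _
        (x (a + ((i:ℝ) + 1) * (s - a) / n) - x (a + (i:ℝ) * (s - a) / n))
        (y (c + ((j:ℝ) + 1) * (t - c) / n) - y (c + (j:ℝ) * (t - c) / n)) with hip
    have hsummand : ∀ i ∈ Finset.range n, ∀ j ∈ Finset.range n,
        Summable (fun k => φ (k+1) * (@inner ℝ _ _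
          (sigLevel x a (a + (i:ℝ) * (s - a) / n) k)
          (sigLevel y c (c + (j:ℝ) * (t - c) / n) k)) * ip i j) := by
      intro i hi j hj
      exact (hsum2 _ (hui_mem i hi) _ (hvj_mem j hj)).mul_right _
    have step1 : rsSum2 (fun u v => kPath d (fun k => φ (k + 1)) x y a c u v) x y a s c t n
        = ∑ i ∈ Finset.range n, ∑ j ∈ Finset.range n, ∑' k,
            φ (k+1) * (@inner ℝ _ _
              (sigLevel x a (a + (i:ℝ) * (s - a) / n) k)
              (sigLevel y c (c + (j:ℝ) * (t - c) / n) k)) * ip i j := by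
      rw [rsSum2]
      apply Finset.sum_congr rfl
      intro i _
      apply Finset.sum_congr rfl
      intro j _
      rw [kPath, ← tsum_mul_right]
    have step2 : ∑ i ∈ Finset.range n, ∑ j ∈ Finset.range n, (∑' k,
            φ (k+1) * (@inner ℝ _ _
              (sigLevel x a (a + (i:ℝ) * (s - a) / n) k)
              (sigLevel y c (c + (j:ℝ) * (t - c) / n) k)) * ip i j)
        = ∑' k, ∑ i ∈ Finset.range n, ∑ j ∈ Finset.range n,
            φ (k+1) * (@inner ℝ _ _
              (sigLevel x a (a + (i:ℝ) * (s - a) / n) k)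
              (sigLevel y c (c + (j:ℝ) * (t - c) / n) k)) * ip i j := by
      rw [Finset.sum_congr rfl
        (fun i hi => (Summable.tsum_finsetSum (fun j hj => hsummand i hi j hj)).symm)]
      exact (Summable.tsum_finsetSum (fun i hi => summable_sum (fun j hj => hsummand i hi j hj))).symm
    have step3 : ∀ k : ℕ, ∑ i ∈ Finset.range n, ∑ j ∈ Finset.range n,
        φ (k+1) * (@inner ℝ _ _
          (sigLevel x a (a + (i:ℝ) * (s - a) / n) k)
          (sigLevel y c (c + (j:ℝ) * (t - c) / n) k)) * ip i j
        = φ (k+1) * G k n := by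
      intro k
      have e1 : ∀ i ∈ Finset.range n, ∀ j ∈ Finset.range n,
          φ (k+1) * (@inner ℝ _ _
            (sigLevel x a (a + (i:ℝ) * (s - a) / n) k)
            (sigLevel y c (c + (j:ℝ) * (t - c) / n) k)) * ip i j
          = φ (k+1) * ((∑ idx : Fin k → Fin d,
              sigWord x a (List.ofFn idx).reverse (a + (i:ℝ) * (s - a) / n) *
              sigWord y c (List.ofFn idx).reverse (c + (j:ℝ) * (t - c) / n)) *
            (∑ α : Fin d,
              (x (a + ((i:ℝ) + 1) * (s - a) / n) α - x (a + (i:ℝ) * (s - a) / n) α) *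
              (y (c + ((j:ℝ) + 1) * (t - c) / n) α - y (c + (j:ℝ) * (t - c) / n) α))) := by
        intro i _ j _
        rw [mul_assoc, sigLevel_inner_eq, hip]
        congr 2
        exact hipexp _ _ _ _
      rw [Finset.sum_congr rfl (fun i hi => Finset.sum_congr rfl (fun j hj => e1 i hi j hj))]
      simp only [← Finset.mul_sum]
      congr 1
      rw [double_sum_factor (Finset.range n) (Finset.range n) Finset.univ Finset.univ
        (fun idx i => sigWord x a (List.ofFn idx).reverse (a + (i:ℝ) * (s - a) / n))
        (fun idx j => sigWord y c (List.ofFn idx).reverse (c + (j:ℝ) * (t - c) / n))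
        (fun i α => x (a + ((i:ℝ) + 1) * (s - a) / n) α - x (a + (i:ℝ) * (s - a) / n) α)
        (fun j α => y (c + ((j:ℝ) + 1) * (t - c) / n) α - y (c + (j:ℝ) * (t - c) / n) α)]
      rw [hGdef]
      apply Finset.sum_congr rfl
      intro idx _
      apply Finset.sum_congr rfl
      intro α _
      rw [rsSum, rsSum]
    rw [step1, step2]
    exact tsum_congr step3
  -- limit of each level
  have hD45 : ∀ k : ℕ, Tendsto (fun n => φ (k+1) * G k n) atTop
      (𝓝 (φ (k+1) * (@inner ℝ _ _ (sigLevel x a s (k+1)) (sigLevel y c t (k+1))))) := by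
    intro k
    have hL : (@inner ℝ _ _ (sigLevel x a s (k+1)) (sigLevel y c t (k+1)))
        = ∑ idx : Fin k → Fin d, ∑ α : Fin d,
            sigWord x a (α :: (List.ofFn idx).reverse) s *
            sigWord y c (α :: (List.ofFn idx).reverse) t := by
      rw [sigLevel_inner_eq, ← Equiv.sum_comp (snocEquiv d k), Fintype.sum_prod_type]
      apply Finset.sum_congr rfl
      intro idx _
      apply Finset.sum_congr rfl
      intro α _
      have he : (snocEquiv d k) (idx, α) = (Fin.snoc idx α : Fin (k+1) → Fin d) := rfl
      rw [he, ofFn_snoc_reverse]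
    rw [hL]
    apply Tendsto.const_mul
    rw [hGdef]
    apply tendsto_finset_sum
    intro idx _
    apply tendsto_finset_sum
    intro α _
    exact (((PX (List.ofFn idx).reverse).2.2 α).1 s ⟨has, hsb⟩).mul
      (((PY (List.ofFn idx).reverse).2.2 α).1 t ⟨hct, hte⟩)
  -- uniform bound
  have hD6 : ∀ n : ℕ, ∀ k : ℕ,
      ‖φ (k+1) * G k n‖ ≤ M * (M ^ k * |φ (k+1)| / (Nat.factorial k : ℝ) ^ 2) := by
    intro n k
    set Bxy := Wx ^ (k+1) / (Nat.factorial (k+1) : ℝ) * (Wy ^ (k+1) / (Nat.factorial (k+1) : ℝ))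
      with hBxy
    have hBxy0 : 0 ≤ Bxy := by rw [hBxy]; positivity
    have hGb : |G k n| ≤ (d:ℝ) ^ k * ((d:ℝ) * Bxy) := by
      rw [hGdef]
      refine (Finset.abs_sum_le_sum_abs _ _).trans ?_
      have hinner1 : ∀ idx ∈ (Finset.univ : Finset (Fin k → Fin d)),
          |∑ α : Fin d, rsSum (sigWord x a (List.ofFn idx).reverse) (fun u => x u α) a s n *
            rsSum (sigWord y c (List.ofFn idx).reverse) (fun u => y u α) c t n|
          ≤ (d:ℝ) * Bxy := by
        intro idx _
        refine (Finset.abs_sum_le_sum_abs _ _).trans ?_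
        have h1 : ∀ α ∈ (Finset.univ : Finset (Fin d)),
            |rsSum (sigWord x a (List.ofFn idx).reverse) (fun u => x u α) a s n *
              rsSum (sigWord y c (List.ofFn idx).reverse) (fun u => y u α) c t n| ≤ Bxy := by
          intro α _
          rw [abs_mul, hBxy]
          have hx1 := hRx (List.ofFn idx).reverse α n
          have hy1 := hRy (List.ofFn idx).reverse α n
          rw [word_len] at hx1 hy1
          exact mul_le_mul hx1 hy1 (abs_nonneg _) (by positivity)
        refine (Finset.sum_le_card_nsmul _ _ _ h1).trans ?_
        rw [nsmul_eq_mul]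
        simp
      refine (Finset.sum_le_card_nsmul _ _ _ hinner1).trans ?_
      rw [nsmul_eq_mul]
      have hcard : ((Finset.univ : Finset (Fin k → Fin d)).card : ℝ) = (d : ℝ) ^ k := by
        simp [Fintype.card_fun]
      rw [hcard]
    rw [Real.norm_eq_abs, abs_mul]
    have step1 : |φ (k+1)| * |G k n| ≤ |φ (k+1)| * ((d:ℝ) ^ k * ((d:ℝ) * Bxy)) :=
      mul_le_mul_of_nonneg_left hGb (abs_nonneg _)
    have step2 : (d:ℝ) ^ k * ((d:ℝ) * Bxy)
        = ((d:ℝ) * Wx * Wy) ^ (k+1) / (Nat.factorial (k+1) : ℝ) ^ 2 := by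
      rw [hBxy, mul_pow, mul_pow]
      field_simp
      ring
    have step3 : ((d:ℝ) * Wx * Wy) ^ (k+1) / (Nat.factorial (k+1) : ℝ) ^ 2
        ≤ M ^ (k+1) / (Nat.factorial k : ℝ) ^ 2 := by
      apply div_le_div₀ (by positivity) (pow_le_pow_left₀ hdWW0 hdWWM _) (by positivity)
      have : (Nat.factorial k : ℝ) ≤ (Nat.factorial (k+1) : ℝ) := by
        exact_mod_cast Nat.factorial_le (Nat.le_succ k)
      have h0 : (0:ℝ) ≤ (Nat.factorial k : ℝ) := by positivity
      exact pow_le_pow_left₀ h0 this 2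
    calc |φ (k+1)| * |G k n| ≤ |φ (k+1)| * ((d:ℝ) ^ k * ((d:ℝ) * Bxy)) := step1
      _ = |φ (k+1)| * (((d:ℝ) * Wx * Wy) ^ (k+1) / (Nat.factorial (k+1) : ℝ) ^ 2) := by
          rw [step2]
      _ ≤ |φ (k+1)| * (M ^ (k+1) / (Nat.factorial k : ℝ) ^ 2) :=
          mul_le_mul_of_nonneg_left step3 (abs_nonneg _)
      _ = M * (M ^ k * |φ (k+1)| / (Nat.factorial k : ℝ) ^ 2) := by
          rw [pow_succ]
          ring
  have hbnd : Summable (fun k => M * (M ^ k * |φ (k+1)| / (Nat.factorial k : ℝ) ^ 2)) :=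
    (hφp M hM0).mul_left M
  have hmain := tendsto_tsum_of_dominated_convergence hbnd hD45
    (Eventually.of_forall hD6)
  have hval : (∑' k, φ (k+1) * (@inner ℝ _ _ (sigLevel x a s (k+1)) (sigLevel y c t (k+1))))
      = kPath d φ x y a c s t - φ 0 := by
    have h0 : (@inner ℝ _ _ (sigLevel x a s 0) (sigLevel y c t 0)) = (1:ℝ) := by
      rw [sigLevel_inner_eq]
      have : ∀ idx : Fin 0 → Fin d,
          sigWord x a (List.ofFn idx).reverse s * sigWord y c (List.ofFn idx).reverse t = 1 := by
        intro idx
        simp only [List.ofFn_zero, List.reverse_nil]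
        show sigWord x a [] s * sigWord y c [] t = 1
        norm_num [sigWord]
      rw [Finset.sum_congr rfl (fun idx _ => this idx)]
      simp
    rw [kPath, Summable.tsum_eq_zero_add (hsum1 s ⟨has, hsb⟩ t ⟨hct, hte⟩), h0]
    ring
  rw [← hval]
  exact Tendsto.congr (fun n => (hD3 n).symm) hmain

end
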